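/- Let A ∈ ℂ^{k×k} be a matrix such that A + Aᴴ is negative semidefinite, and let λ ∈ ℂ with Re λ = 0. Then Ker((A - λ I)²) = Ker(A - λ I); that is, a purely imaginary eigenvalue of such a matrix admits no generalized eigenvectors of order two. -/

import Mathlib

open Matrix ComplexOrder

/-- If `A + Aᴴ` is negative semidefinite (Hermitian with `xᴴ(A+Aᴴ)x ≤ 0` for all `x`)
and `Re λ = 0`, then `Ker((A - λI)²) = Ker(A - λI)`: a purely imaginary eigenvalue
admits no generalized eigenvectors of order two. -/
theorem no_generalized_imaginary_eigenvectors
    (k : ℕ) (hk : 0 < k) (A : Matrix (Fin k) (Fin k) ℂ)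
    (hHerm : (A + Aᴴ).IsHermitian)
    (hNeg : ∀ x : Fin k → ℂ, star x ⬝ᵥ ((A + Aᴴ) *ᵥ x) ≤ 0)
    (lam : ℂ) (hlam : lam.re = 0) :
    LinearMap.ker (((A - lam • (1 : Matrix (Fin k) (Fin k) ℂ)) ^ 2).mulVecLin) =
      LinearMap.ker ((A - lam • (1 : Matrix (Fin k) (Fin k) ℂ)).mulVecLin) := by
  set B : Matrix (Fin k) (Fin k) ℂ := A - lam • (1 : Matrix (Fin k) (Fin k) ℂ) with hB
  have hM : B + Bᴴ = A + Aᴴ := by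
    have hconj : (starRingEnd ℂ) lam = -lam := by
      apply Complex.ext <;> simp [hlam]
    simp [hB, conjTranspose_smul, hconj, sub_eq_add_neg]
    abel
  have hPSD : Matrix.PosSemidef (-(A + Aᴴ)) := by
    rw [posSemidef_iff_dotProduct_mulVec]
    constructor
    · exact hHerm.neg
    · intro x
      rw [neg_mulVec, dotProduct_neg]
      exact neg_nonneg.mpr (hNeg x)
  apply le_antisymm
  · intro x hx
    simp only [LinearMap.mem_ker, mulVecLin_apply] at hx ⊢
    rw [pow_two, ← mulVec_mulVec] at hx
    set y : Fin k → ℂ := B *ᵥ x with hy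
    -- y ∈ ker B
    have hBy : B *ᵥ y = 0 := hx
    -- star y ⬝ᵥ (B+Bᴴ) y = 0
    have h1 : star y ⬝ᵥ (B *ᵥ y) = 0 := by rw [hBy, dotProduct_zero]
    have h2 : star y ⬝ᵥ (Bᴴ *ᵥ y) = 0 := by
      rw [dotProduct_mulVec, ← star_mulVec, hBy, star_zero, zero_dotProduct]
    have hMy : (-(A + Aᴴ)) *ᵥ y = 0 := by
      rw [← hPSD.dotProduct_mulVec_zero_iff]
      rw [← hM, neg_mulVec, dotProduct_neg, add_mulVec, dotProduct_add, h1, h2]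
      simp
    have hMAy : (A + Aᴴ) *ᵥ y = 0 := by
      rw [neg_mulVec, neg_eq_zero] at hMy
      exact hMy
    have hBHy : Bᴴ *ᵥ y = 0 := by
      have : (B + Bᴴ) *ᵥ y = 0 := by rw [hM]; exact hMAy
      rw [add_mulVec, hBy, zero_add] at this
      exact this
    -- star y ⬝ᵥ y = star y ⬝ᵥ (B x) = star (Bᴴ y) ⬝ᵥ x = 0
    have hyy : star y ⬝ᵥ y = 0 := by
      calc star y ⬝ᵥ y = star y ⬝ᵥ (B *ᵥ x) := by rw [hy]
        _ = star (Bᴴ *ᵥ y) ⬝ᵥ x := by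
            have hsw : star (Bᴴ *ᵥ y) = star y ᵥ* B := by
              rw [star_mulVec, conjTranspose_conjTranspose]
            rw [dotProduct_mulVec, ← hsw]
        _ = 0 := by rw [hBHy, star_zero, zero_dotProduct]
    have : y = 0 := by
      rwa [dotProduct_star_self_eq_zero] at hyy
    exact this
  · intro x hx
    simp only [LinearMap.mem_ker, mulVecLin_apply] at hx ⊢
    rw [pow_two, ← mulVec_mulVec, hx, mulVec_zero]
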